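/- arXiv:1808.05967 — 5 statements merged into one kernel-verified Lean document; each statement's English description precedes it below -/
import Mathlib

section
/- The function G_1 : ℝ → ℝ defined by G_1(Z) = cos²(Z/2) for |Z| ≤ π and G_1(Z) = 0 for |Z| > π is continuously differentiable on ℝ, and for every Z ∈ ℝ it satisfies G_1(Z) − G_1(Z)² + (−Z/2 + ∫_0^Z G_1(Z̃)dZ̃)·G_1′(Z) = 0. -/
open Real MeasureTheory Set Filter

/-- The stable self-similar blow-up profile `G₁(Z) = cos²(Z/2)` for `|Z| ≤ π`, `0` otherwise. -/
noncomputable def G1 (Z : ℝ) : ℝ := if |Z| ≤ π then Real.cos (Z / 2) ^ 2 else 0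

/-- clamp to `[-π, π]` -/
noncomputable def clπ (Z : ℝ) : ℝ := max (-π) (min Z π)

lemma clπ_eq {Z : ℝ} (h : |Z| ≤ π) : clπ Z = Z := by
  rcases abs_le.mp h with ⟨h1, h2⟩
  simp [clπ, min_eq_left h2, max_eq_right h1]

lemma clπ_ge {Z : ℝ} (h : π ≤ Z) : clπ Z = π := by
  have : min Z π = π := min_eq_right h
  simp [clπ, this, max_eq_right (by linarith [Real.pi_pos] : -π ≤ π)]

lemma clπ_le {Z : ℝ} (h : Z ≤ -π) : clπ Z = -π := by
  have : min Z π = Z := min_eq_left (by linarith [Real.pi_pos])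
  simp [clπ, this, max_eq_left h]

lemma continuous_clπ : Continuous clπ :=
  continuous_const.max (continuous_id.min continuous_const)

lemma G1_eq (Z : ℝ) : G1 Z = (1 + Real.cos (clπ Z)) / 2 := by
  unfold G1
  split_ifs with h
  · rw [clπ_eq h, Real.cos_sq]
    rw [show 2 * (Z / 2) = Z by ring]
    ring
  · push_neg at h
    rcases le_or_gt 0 Z with hz | hz
    · rw [abs_of_nonneg hz] at h
      rw [clπ_ge h.le, Real.cos_pi]; ring
    · rw [abs_of_neg hz] at h
      rw [clπ_le (by linarith), Real.cos_neg, Real.cos_pi]; ring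

/-- Gluing one-sided derivatives. -/
lemma glue_deriv {f : ℝ → ℝ} {f' a : ℝ} (h1 : HasDerivWithinAt f f' (Iic a) a)
    (h2 : HasDerivWithinAt f f' (Ici a) a) : HasDerivAt f f' a := by
  have h := h1.union h2
  rwa [Iic_union_Ici, hasDerivWithinAt_univ] at h

/-- Derivative of a smooth function composed with the clamp, given flatness at `±π`. -/
lemma hasDerivAt_comp_clπ (φ φ' : ℝ → ℝ) (hφ : ∀ t, HasDerivAt φ (φ' t) t)
    (hp : φ' π = 0) (hm : φ' (-π) = 0) (Z : ℝ) :
    HasDerivAt (fun x => φ (clπ x)) (φ' (clπ Z)) Z := by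
  have hpi := Real.pi_pos
  rcases lt_trichotomy Z π with hZπ | rfl | hZπ
  · rcases lt_trichotomy (-π) Z with hZm | rfl | hZm
    · -- interior: |Z| < π
      have habs : |Z| < π := abs_lt.mpr ⟨hZm, hZπ⟩
      have hev : (fun x => φ (clπ x)) =ᶠ[nhds Z] φ := by
        have : {x : ℝ | |x| < π} ∈ nhds Z :=
          (isOpen_lt continuous_abs continuous_const).mem_nhds habs
        filter_upwards [this] with x hx
        rw [clπ_eq hx.le]
      rw [clπ_eq habs.le]
      exact (hφ Z).congr_of_eventuallyEq hev
    · -- Z = -π : glue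
      rw [clπ_eq (by rw [abs_neg, abs_of_pos hpi])]
      apply glue_deriv
      · -- left: constant φ (-π)
        have hev : (fun x => φ (clπ x)) =ᶠ[nhdsWithin (-π) (Iic (-π))] fun _ => φ (-π) := by
          filter_upwards [eventually_mem_nhdsWithin] with x hx
          rw [clπ_le hx]
        rw [hm]
        exact (hasDerivWithinAt_const (-π) _ (φ (-π))).congr_of_eventuallyEq hev
          (by rw [clπ_le le_rfl])
      · -- right: equals φ near -π within Ici (-π)
        have hev : (fun x => φ (clπ x)) =ᶠ[nhdsWithin (-π) (Ici (-π))] φ := by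
          have h2 : ∀ᶠ x in nhdsWithin (-π) (Ici (-π)), x < π :=
            (eventually_lt_nhds (by linarith)).filter_mono nhdsWithin_le_nhds
          filter_upwards [eventually_mem_nhdsWithin, h2] with x hx1 hx2
          rw [clπ_eq (abs_le.mpr ⟨hx1, hx2.le⟩)]
        exact ((hφ (-π)).hasDerivWithinAt).congr_of_eventuallyEq hev
          (by rw [clπ_eq (by rw [abs_neg, abs_of_pos hpi])])
    · -- Z < -π
      have hev : (fun x => φ (clπ x)) =ᶠ[nhds Z] fun _ => φ (-π) := by
        filter_upwards [eventually_lt_nhds hZm] with x hx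
        rw [clπ_le hx.le]
      rw [clπ_le hZm.le, hm]
      exact (hasDerivAt_const Z (φ (-π))).congr_of_eventuallyEq hev
  · -- Z = π : glue
    rw [clπ_eq (by rw [abs_of_pos hpi])]
    apply glue_deriv
    · have hev : (fun x => φ (clπ x)) =ᶠ[nhdsWithin π (Iic π)] φ := by
        have h2 : ∀ᶠ x in nhdsWithin π (Iic π), -π < x :=
          (eventually_gt_nhds (by linarith)).filter_mono nhdsWithin_le_nhds
        filter_upwards [eventually_mem_nhdsWithin, h2] with x hx1 hx2
        rw [clπ_eq (abs_le.mpr ⟨hx2.le, hx1⟩)]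
      exact ((hφ π).hasDerivWithinAt).congr_of_eventuallyEq hev
        (by rw [clπ_eq (by rw [abs_of_pos hpi])])
    · have hev : (fun x => φ (clπ x)) =ᶠ[nhdsWithin π (Ici π)] fun _ => φ π := by
        filter_upwards [eventually_mem_nhdsWithin] with x hx
        rw [clπ_ge hx]
      rw [hp]
      exact (hasDerivWithinAt_const π _ (φ π)).congr_of_eventuallyEq hev
        (by rw [clπ_ge le_rfl])
  · -- Z > π
    have hev : (fun x => φ (clπ x)) =ᶠ[nhds Z] fun _ => φ π := by
      filter_upwards [eventually_gt_nhds hZπ] with x hx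
      rw [clπ_ge hx.le]
    rw [clπ_ge hZπ.le, hp]
    exact (hasDerivAt_const Z (φ π)).congr_of_eventuallyEq hev

lemma hasDerivAt_G1 (Z : ℝ) : HasDerivAt G1 (-Real.sin (clπ Z) / 2) Z := by
  have hG : G1 = fun x => (1 + Real.cos (clπ x)) / 2 := funext G1_eq
  rw [hG]
  have h := hasDerivAt_comp_clπ (fun t => (1 + Real.cos t) / 2)
    (fun t => -Real.sin t / 2)
    (fun t => ((Real.hasDerivAt_cos t).const_add 1).div_const 2)
    (by simp) (by simp) Z
  exact h

lemma deriv_G1 (Z : ℝ) : deriv G1 Z = -Real.sin (clπ Z) / 2 := (hasDerivAt_G1 Z).deriv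

lemma hasDerivAt_H (Z : ℝ) :
    HasDerivAt (fun x => clπ x / 2 + Real.sin (clπ x) / 2) (G1 Z) Z := by
  have h := hasDerivAt_comp_clπ (fun t => t / 2 + Real.sin t / 2)
    (fun t => (1 + Real.cos t) / 2)
    (fun t => by
      have := ((hasDerivAt_id t).div_const 2).add ((Real.hasDerivAt_sin t).div_const 2)
      exact this.congr_deriv (by ring))
    (by simp) (by simp) Z
  rw [G1_eq]
  exact h

/-- `G₁` is continuously differentiable and satisfies the self-similar profile equation
`G₁ − G₁² + (−Z/2 + ∫₀^Z G₁)·G₁′ = 0` (the case `k = 1`). -/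
theorem stmt3 :
    ContDiff ℝ 1 G1 ∧
    ∀ Z : ℝ,
      G1 Z - G1 Z ^ 2 + (-Z / 2 + ∫ z in (0:ℝ)..Z, G1 z) * deriv G1 Z = 0 := by
  have hcont : Continuous G1 := by
    rw [funext G1_eq]
    exact (continuous_const.add (Real.continuous_cos.comp continuous_clπ)).div_const 2
  constructor
  · rw [contDiff_one_iff_deriv]
    refine ⟨fun Z => (hasDerivAt_G1 Z).differentiableAt, ?_⟩
    rw [funext deriv_G1]
    exact ((Real.continuous_sin.comp continuous_clπ).neg.div_const 2)
  · intro Z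
    have hint : (∫ z in (0:ℝ)..Z, G1 z) = clπ Z / 2 + Real.sin (clπ Z) / 2 := by
      have h0 : clπ 0 = 0 := clπ_eq (by simp [Real.pi_pos.le])
      have := intervalIntegral.integral_eq_sub_of_hasDerivAt
        (f := fun x => clπ x / 2 + Real.sin (clπ x) / 2) (f' := G1) (a := 0) (b := Z)
        (fun x _ => hasDerivAt_H x) (hcont.intervalIntegrable 0 Z)
      rw [this]
      simp [h0]
    rw [hint, deriv_G1, G1_eq]
    rcases le_or_gt (|Z|) π with h | h
    · rw [clπ_eq h]
      have := Real.sin_sq_add_cos_sq Z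
      nlinarith [this]
    · rcases le_or_gt 0 Z with hz | hz
      · rw [abs_of_nonneg hz] at h
        rw [clπ_ge h.le]
        simp
      · rw [abs_of_neg hz] at h
        rw [clπ_le (by linarith)]
        simp
end

section
/- Let ε : ℝ → ℝ be continuously differentiable and suppose that the functions Y ↦ ε(Y)²·e^{−Y²/4}, Y ↦ ε′(Y)²·e^{−Y²/4}, and Y ↦ Y²·ε(Y)²·e^{−Y²/4} are integrable on ℝ. Then ∫_ℝ Y²·ε(Y)²·e^{−Y²/4} dY ≤ 4·∫_ℝ ε(Y)²·e^{−Y²/4} dY + 16·∫_ℝ ε′(Y)²·e^{−Y²/4} dY. -/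
open Real MeasureTheory Set

/-- Weighted Poincaré-type inequality for the Gaussian weight `e^{−Y²/4}`:
`∫ Y²ε²e^{−Y²/4} ≤ 4∫ ε²e^{−Y²/4} + 16∫ (ε′)²e^{−Y²/4}`. -/
theorem stmt6 (ε : ℝ → ℝ) (hε : ContDiff ℝ 1 ε)
    (h1 : Integrable (fun Y : ℝ => ε Y ^ 2 * Real.exp (-Y ^ 2 / 4)))
    (h2 : Integrable (fun Y : ℝ => deriv ε Y ^ 2 * Real.exp (-Y ^ 2 / 4)))
    (h3 : Integrable (fun Y : ℝ => Y ^ 2 * ε Y ^ 2 * Real.exp (-Y ^ 2 / 4))) :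
    (∫ Y : ℝ, Y ^ 2 * ε Y ^ 2 * Real.exp (-Y ^ 2 / 4))
      ≤ 4 * (∫ Y : ℝ, ε Y ^ 2 * Real.exp (-Y ^ 2 / 4))
        + 16 * ∫ Y : ℝ, deriv ε Y ^ 2 * Real.exp (-Y ^ 2 / 4) := by
  have hwpos : ∀ Y : ℝ, 0 < Real.exp (-Y ^ 2 / 4) := fun Y => Real.exp_pos _
  have hεd : Differentiable ℝ ε := hε.differentiable one_ne_zero
  have hε'c : Continuous (deriv ε) := hε.continuous_deriv le_rfl
  have hεc : Continuous ε := hε.continuous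
  have hwc : Continuous fun Y : ℝ => Real.exp (-Y ^ 2 / 4) := by
    apply Real.continuous_exp.comp; continuity
  -- cross term integrability
  have hcross : Integrable (fun Y : ℝ => Y * ε Y * deriv ε Y * Real.exp (-Y ^ 2 / 4)) := by
    apply Integrable.mono' ((h3.add h2).div_const 2)
    · exact (((continuous_id.mul hεc).mul hε'c).mul hwc).aestronglyMeasurable
    · filter_upwards with Y
      have hw := (hwpos Y).le
      rw [Real.norm_eq_abs]
      simp only [Pi.add_apply]
      rcases abs_cases (Y * ε Y * deriv ε Y * Real.exp (-Y ^ 2 / 4)) with ⟨he, _⟩ | ⟨he, _⟩ <;>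
        rw [he] <;>
        nlinarith [mul_nonneg (sq_nonneg (Y * ε Y - deriv ε Y)) hw,
          mul_nonneg (sq_nonneg (Y * ε Y + deriv ε Y)) hw]
  set G : ℝ → ℝ := fun Y => Y * ε Y ^ 2 * Real.exp (-Y ^ 2 / 4) with hGdef
  set g : ℝ → ℝ := fun Y =>
    (ε Y ^ 2 * Real.exp (-Y ^ 2 / 4) + 2 * (Y * ε Y * deriv ε Y * Real.exp (-Y ^ 2 / 4)))
      - Y ^ 2 * ε Y ^ 2 * Real.exp (-Y ^ 2 / 4) / 2 with hgdef
  have hGd : ∀ Y : ℝ, HasDerivAt G (g Y) Y := by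
    intro Y
    have hin : HasDerivAt (fun Y : ℝ => -Y ^ 2 / 4) (-Y / 2) Y := by
      have := ((hasDerivAt_pow 2 Y).neg.div_const 4)
      refine this.congr_deriv ?_
      push_cast; ring
    have hwd : HasDerivAt (fun Y : ℝ => Real.exp (-Y ^ 2 / 4))
        (-Y / 2 * Real.exp (-Y ^ 2 / 4)) Y := by
      have := hin.exp
      convert this using 1
      ring
    have hεsq : HasDerivAt (fun Y : ℝ => ε Y ^ 2) (2 * ε Y * deriv ε Y) Y := by
      have := ((hεd Y).hasDerivAt).pow 2
      refine this.congr_deriv ?_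
      push_cast; ring
    have hfst : HasDerivAt (fun Y : ℝ => Y * ε Y ^ 2)
        (1 * ε Y ^ 2 + Y * (2 * ε Y * deriv ε Y)) Y := (hasDerivAt_id Y).mul hεsq
    have := hfst.mul hwd
    rw [hGdef, hgdef]
    refine this.congr_deriv ?_
    ring
  have hGint : Integrable G := by
    apply Integrable.mono' ((h1.add h3).div_const 2)
    · exact ((continuous_id.mul (hεc.pow 2)).mul hwc).aestronglyMeasurable
    · filter_upwards with Y
      have hw := (hwpos Y).le
      rw [Real.norm_eq_abs]
      simp only [Pi.add_apply, hGdef]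
      rcases abs_cases (Y * ε Y ^ 2 * Real.exp (-Y ^ 2 / 4)) with ⟨he, _⟩ | ⟨he, _⟩ <;>
        rw [he] <;>
        nlinarith [mul_nonneg (mul_nonneg (sq_nonneg (Y - 1)) (sq_nonneg (ε Y))) hw,
          mul_nonneg (mul_nonneg (sq_nonneg (Y + 1)) (sq_nonneg (ε Y))) hw]
  have hC : Integrable (fun Y : ℝ => 2 * (Y * ε Y * deriv ε Y * Real.exp (-Y ^ 2 / 4))) :=
    hcross.const_mul 2
  have hA : Integrable (fun Y : ℝ =>
      ε Y ^ 2 * Real.exp (-Y ^ 2 / 4) + 2 * (Y * ε Y * deriv ε Y * Real.exp (-Y ^ 2 / 4))) :=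
    h1.add hC
  have hB : Integrable (fun Y : ℝ => Y ^ 2 * ε Y ^ 2 * Real.exp (-Y ^ 2 / 4) / 2) :=
    h3.div_const 2
  have hgint : Integrable g := hA.sub hB
  have hTop : Filter.Tendsto G Filter.atTop (nhds 0) :=
    tendsto_zero_of_hasDerivAt_of_integrableOn_Ioi (a := 0)
      (fun x _ => hGd x) hgint.integrableOn hGint.integrableOn
  have hBot : Filter.Tendsto G Filter.atBot (nhds 0) :=
    tendsto_zero_of_hasDerivAt_of_integrableOn_Iic (a := 0)
      (fun x _ => hGd x) hgint.integrableOn hGint.integrableOn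
  have hIoi : ∫ x in Ioi (0:ℝ), g x = 0 - G 0 :=
    integral_Ioi_of_hasDerivAt_of_tendsto' (fun x _ => hGd x) hgint.integrableOn hTop
  have hIic : ∫ x in Iic (0:ℝ), g x = G 0 - 0 :=
    integral_Iic_of_hasDerivAt_of_tendsto' (fun x _ => hGd x) hgint.integrableOn hBot
  have htot : ∫ x : ℝ, g x = 0 := by
    rw [← intervalIntegral.integral_Iic_add_Ioi hgint.integrableOn hgint.integrableOn,
      hIoi, hIic]
    ring
  have hsplit : ∫ Y : ℝ, g Y =
      ((∫ Y : ℝ, ε Y ^ 2 * Real.exp (-Y ^ 2 / 4))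
          + 2 * ∫ Y : ℝ, Y * ε Y * deriv ε Y * Real.exp (-Y ^ 2 / 4))
        - (∫ Y : ℝ, Y ^ 2 * ε Y ^ 2 * Real.exp (-Y ^ 2 / 4)) / 2 := by
    simp only [hgdef]
    rw [integral_sub hA hB, integral_add h1 hC, integral_const_mul 2 _, integral_div]
  have hkey : (∫ Y : ℝ, ε Y ^ 2 * Real.exp (-Y ^ 2 / 4))
        + 2 * (∫ Y : ℝ, Y * ε Y * deriv ε Y * Real.exp (-Y ^ 2 / 4))
      = (∫ Y : ℝ, Y ^ 2 * ε Y ^ 2 * Real.exp (-Y ^ 2 / 4)) / 2 := by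
    rw [hsplit] at htot; linarith
  have hRB : Integrable (fun Y : ℝ =>
      Y ^ 2 * ε Y ^ 2 * Real.exp (-Y ^ 2 / 4) / 8
        + 2 * (deriv ε Y ^ 2 * Real.exp (-Y ^ 2 / 4))) :=
    (h3.div_const 8).add (h2.const_mul 2)
  have hcb : (∫ Y : ℝ, Y * ε Y * deriv ε Y * Real.exp (-Y ^ 2 / 4))
      ≤ (∫ Y : ℝ, Y ^ 2 * ε Y ^ 2 * Real.exp (-Y ^ 2 / 4)) / 8
        + 2 * ∫ Y : ℝ, deriv ε Y ^ 2 * Real.exp (-Y ^ 2 / 4) := by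
    have hmono := integral_mono hcross hRB (fun Y => by
      have hw := (hwpos Y).le
      nlinarith [mul_nonneg (sq_nonneg (Y * ε Y / 2 - 2 * deriv ε Y)) hw])
    rwa [integral_add (h3.div_const 8) (h2.const_mul 2), integral_div,
      integral_const_mul 2 _] at hmono
  linarith
end

section
/- Let T ∈ ℝ, μ > 0 and y₀ ∈ ℝ. For t < T define y*(t) = μπ(T−t)^{−1/2} + y₀ and ψ(t,y) = (T−t)^{−1}·G_1((y − y*(t))·(T−t)^{1/2}/μ) for y ∈ ℝ, where G_1(Z) = cos²(Z/2) for |Z| ≤ π and G_1(Z) = 0 otherwise. Then for every t < T and every y ∈ ℝ, ψ is differentiable in t and in y at (t,y), and ∂_t ψ(t,y) − ψ(t,y)² + (∫_{−∞}^y ψ(t,ỹ) dỹ)·∂_y ψ(t,y) = 0. In particular ψ is a backward self-similar solution of the inviscid reduced Prandtl equation blowing up at time T. -/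
open Real MeasureTheory Set

/-- The backward self-similar solution
`ψ(t,y) = (T−t)⁻¹ G₁((y − y*(t)) (T−t)^{1/2}/μ)` with `y*(t) = μπ(T−t)^{−1/2} + y₀`. -/
noncomputable def ψfun (T μ y₀ t y : ℝ) : ℝ :=
  (T - t)⁻¹ *
    G1 ((y - (μ * π * (T - t) ^ (-(1:ℝ) / 2) + y₀)) * Real.sqrt (T - t) / μ)

noncomputable def G1d (Z : ℝ) : ℝ := if |Z| ≤ π then -Real.sin Z / 2 else 0

noncomputable def Fint (Z : ℝ) : ℝ :=
  if Z ≤ -π then 0 else if Z ≤ π then (Z + π) / 2 + Real.sin Z / 2 else π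

lemma cosh_hasDerivAt (x : ℝ) :
    HasDerivAt (fun x : ℝ => Real.cos (x / 2) ^ 2) (-Real.sin x / 2) x := by
  have h1 : HasDerivAt (fun x : ℝ => x / 2) (1 / 2) x := (hasDerivAt_id x).div_const 2
  have h2 := (Real.hasDerivAt_cos (x / 2)).comp x h1
  have h3 := h2.pow 2
  refine h3.congr_deriv ?_
  have hs := Real.sin_two_mul (x / 2)
  rw [show 2 * (x / 2) = x by ring] at hs
  rw [hs]; simp [Function.comp]; ring

lemma G1_eq_cosh {x : ℝ} (hx : |x| ≤ π) : G1 x = Real.cos (x / 2) ^ 2 := if_pos hx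

lemma G1_eq_zero {x : ℝ} (hx : π < |x|) : G1 x = 0 := if_neg (not_le.mpr hx)

lemma G1_pi : G1 π = 0 := by
  rw [G1_eq_cosh (by rw [abs_of_pos Real.pi_pos])]
  simp [Real.cos_pi_div_two]

lemma G1_neg_pi : G1 (-π) = 0 := by
  rw [G1_eq_cosh (by rw [abs_neg, abs_of_pos Real.pi_pos])]
  rw [neg_div, Real.cos_neg, Real.cos_pi_div_two]; ring

lemma G1_eq_zero_of_le {x : ℝ} (hx : x ≤ -π) : G1 x = 0 := by
  rcases eq_or_lt_of_le hx with h | h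
  · rw [h]; exact G1_neg_pi
  · exact G1_eq_zero (by rw [abs_of_neg (by linarith [Real.pi_pos])]; linarith)

lemma G1_hasDerivAt (Z : ℝ) : HasDerivAt G1 (G1d Z) Z := by
  rcases lt_trichotomy |Z| π with h | h | h
  · have hev : ∀ᶠ x in nhds Z, |x| < π :=
      (isOpen_lt continuous_abs continuous_const).mem_nhds h
    have hd : HasDerivAt G1 (-Real.sin Z / 2) Z :=
      (cosh_hasDerivAt Z).congr_of_eventuallyEq
        (hev.mono fun x hx => if_pos hx.le)
    simpa only [G1d, if_pos h.le] using hd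
  · have hZ : Z = π ∨ Z = -π := (abs_eq (le_of_lt Real.pi_pos)).mp h
    have hGd : G1d Z = 0 := by
      rcases hZ with rfl | rfl <;> simp [G1d]
    rw [hGd]
    have hpi := Real.pi_pos
    rcases hZ with rfl | rfl
    · have hleft : HasDerivWithinAt G1 0 (Iic π) π := by
        have hb : HasDerivWithinAt (fun x : ℝ => Real.cos (x / 2) ^ 2) 0 (Iic π) π := by
          have h2 := (cosh_hasDerivAt π).hasDerivWithinAt (s := Iic π)
          have h0 : -Real.sin π / 2 = 0 := by simp
          rwa [h0] at h2
        refine hb.congr_of_eventuallyEq ?_ (by rw [G1_pi]; simp)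
        filter_upwards [self_mem_nhdsWithin,
          mem_nhdsWithin_of_mem_nhds (Ioi_mem_nhds (by linarith : -π < π))]
          with x hx1 hx2
        exact G1_eq_cosh (abs_le.mpr ⟨le_of_lt hx2, hx1⟩)
      have hright : HasDerivWithinAt G1 0 (Ici π) π := by
        refine (hasDerivWithinAt_const π (Ici π) (0:ℝ)).congr (fun x hx => ?_) G1_pi
        rcases eq_or_lt_of_le (mem_Ici.mp hx) with h' | h'
        · rw [← h']; exact G1_pi
        · exact G1_eq_zero (by rw [abs_of_pos (by linarith)]; exact h')
      have := hleft.union hright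
      rwa [Iic_union_Ici, hasDerivWithinAt_univ] at this
    · have hleft : HasDerivWithinAt G1 0 (Iic (-π)) (-π) := by
        refine (hasDerivWithinAt_const (-π) (Iic (-π)) (0:ℝ)).congr
          (fun x hx => G1_eq_zero_of_le (mem_Iic.mp hx)) G1_neg_pi
      have hright : HasDerivWithinAt G1 0 (Ici (-π)) (-π) := by
        have hb : HasDerivWithinAt (fun x : ℝ => Real.cos (x / 2) ^ 2) 0 (Ici (-π)) (-π) := by
          have h2 := (cosh_hasDerivAt (-π)).hasDerivWithinAt (s := Ici (-π))
          have h0 : -Real.sin (-π) / 2 = 0 := by simp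
          rwa [h0] at h2
        refine hb.congr_of_eventuallyEq ?_ (by rw [G1_neg_pi, neg_div, Real.cos_neg, Real.cos_pi_div_two]; ring)
        filter_upwards [self_mem_nhdsWithin,
          mem_nhdsWithin_of_mem_nhds (Iio_mem_nhds (by linarith : -π < π))]
          with x hx1 hx2
        exact G1_eq_cosh (abs_le.mpr ⟨hx1, le_of_lt hx2⟩)
      have := hleft.union hright
      rwa [Iic_union_Ici, hasDerivWithinAt_univ] at this
  · have hev : ∀ᶠ x in nhds Z, π < |x| :=
      (isOpen_lt continuous_const continuous_abs).mem_nhds h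
    have hd : HasDerivAt G1 0 Z :=
      (hasDerivAt_const Z (0:ℝ)).congr_of_eventuallyEq
        (hev.mono fun x hx => if_neg (not_le.mpr hx))
    simpa only [G1d, if_neg (not_le.mpr h)] using hd

lemma Fint_of_le {x : ℝ} (h : x ≤ -π) : Fint x = 0 := if_pos h

lemma Fint_of_mem {x : ℝ} (h1 : -π < x) (h2 : x ≤ π) :
    Fint x = (x + π) / 2 + Real.sin x / 2 := by
  rw [Fint, if_neg (not_le.mpr h1), if_pos h2]

lemma Fint_of_gt {x : ℝ} (h : π < x) : Fint x = π := by
  rw [Fint, if_neg (by push_neg; linarith [Real.pi_pos]), if_neg (not_le.mpr h)]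

lemma Fint_eq_m {x : ℝ} (h1 : -π ≤ x) (h2 : x ≤ π) :
    Fint x = (x + π) / 2 + Real.sin x / 2 := by
  rcases eq_or_lt_of_le h1 with h | h
  · rw [← h, Fint_of_le le_rfl]; simp
  · exact Fint_of_mem h h2

lemma m_hasDerivAt (x : ℝ) :
    HasDerivAt (fun x : ℝ => (x + π) / 2 + Real.sin x / 2) (1 / 2 + Real.cos x / 2) x :=
  (((hasDerivAt_id x).add_const π).div_const 2).add ((Real.hasDerivAt_sin x).div_const 2)

lemma m_deriv_eq {x : ℝ} (hx : |x| ≤ π) : 1 / 2 + Real.cos x / 2 = G1 x := by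
  rw [G1_eq_cosh hx, Real.cos_sq, show 2 * (x / 2) = x by ring]

lemma Fint_hasDerivAt (Z : ℝ) : HasDerivAt Fint (G1 Z) Z := by
  have hpi := Real.pi_pos
  rcases lt_trichotomy Z (-π) with h | h | h
  · have hev : ∀ᶠ x in nhds Z, x < -π := Iio_mem_nhds h
    have hd : HasDerivAt Fint 0 Z :=
      (hasDerivAt_const Z (0:ℝ)).congr_of_eventuallyEq
        (hev.mono fun x hx => Fint_of_le hx.le)
    rwa [G1_eq_zero_of_le h.le]
  · subst h
    rw [G1_neg_pi]
    have hleft : HasDerivWithinAt Fint 0 (Iic (-π)) (-π) :=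
      (hasDerivWithinAt_const (-π) (Iic (-π)) (0:ℝ)).congr
        (fun x hx => Fint_of_le (mem_Iic.mp hx)) (Fint_of_le le_rfl)
    have hright : HasDerivWithinAt Fint 0 (Ici (-π)) (-π) := by
      have hb := (m_hasDerivAt (-π)).hasDerivWithinAt (s := Ici (-π))
      have h0 : (1 / 2 + Real.cos (-π) / 2) = 0 := by rw [Real.cos_neg, Real.cos_pi]; ring
      rw [h0] at hb
      refine hb.congr_of_eventuallyEq ?_ (by rw [Fint_eq_m le_rfl (by linarith)])
      filter_upwards [self_mem_nhdsWithin,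
        mem_nhdsWithin_of_mem_nhds (Iio_mem_nhds (by linarith : -π < π))]
        with x hx1 hx2
      exact Fint_eq_m hx1 hx2.le
    have := hleft.union hright
    rwa [Iic_union_Ici, hasDerivWithinAt_univ] at this
  · rcases lt_trichotomy Z π with h2 | h2 | h2
    · have hev : Fint =ᶠ[nhds Z] fun x => (x + π) / 2 + Real.sin x / 2 := by
        filter_upwards [Ioi_mem_nhds h, Iio_mem_nhds h2] with x hx1 hx2
        exact Fint_of_mem hx1 hx2.le
      have hd := (m_hasDerivAt Z).congr_of_eventuallyEq hev
      rwa [m_deriv_eq (abs_le.mpr ⟨h.le, h2.le⟩)] at hd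
    · subst h2
      have hG : G1 π = 0 := G1_pi
      rw [hG]
      have hleft : HasDerivWithinAt Fint 0 (Iic π) π := by
        have hb := (m_hasDerivAt π).hasDerivWithinAt (s := Iic π)
        have h0 : (1 / 2 + Real.cos π / 2) = 0 := by rw [Real.cos_pi]; ring
        rw [h0] at hb
        refine hb.congr_of_eventuallyEq ?_ (Fint_eq_m (by linarith) le_rfl)
        filter_upwards [self_mem_nhdsWithin,
          mem_nhdsWithin_of_mem_nhds (Ioi_mem_nhds (by linarith : -π < π))]
          with x hx1 hx2
        exact Fint_eq_m hx2.le hx1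
      have hright : HasDerivWithinAt Fint 0 (Ici π) π := by
        refine (hasDerivWithinAt_const π (Ici π) (π:ℝ)).congr (fun x hx => ?_) ?_
        · rcases eq_or_lt_of_le (mem_Ici.mp hx) with h' | h'
          · rw [← h', Fint_eq_m (by linarith) le_rfl]; simp
          · exact Fint_of_gt h'
        · rw [Fint_eq_m (by linarith) le_rfl]; simp
      have := hleft.union hright
      rwa [Iic_union_Ici, hasDerivWithinAt_univ] at this
    · have hev : ∀ᶠ x in nhds Z, π < x := Ioi_mem_nhds h2
      have hd : HasDerivAt Fint 0 Z :=
        ((hasDerivAt_const Z π).congr_of_eventuallyEq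
          (hev.mono fun x hx => Fint_of_gt hx)).congr_deriv rfl
      rwa [G1_eq_zero (by rw [abs_of_pos (by linarith)]; exact h2)]

lemma G1_continuous : Continuous G1 :=
  continuous_iff_continuousAt.mpr fun x => (G1_hasDerivAt x).continuousAt

lemma key_identity (a : ℝ) : G1 a - G1 a ^ 2 + G1d a * (Fint a - (a + π) / 2) = 0 := by
  have hpi := Real.pi_pos
  rcases lt_trichotomy a (-π) with h | h | h
  · have habs : π < |a| := by rw [abs_of_neg (by linarith)]; linarith
    rw [G1_eq_zero habs, G1d, if_neg (not_le.mpr habs)]; ring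
  · subst h
    rw [G1_neg_pi, G1d, if_pos (by rw [abs_neg, abs_of_pos hpi])]
    simp
  · rcases le_or_gt a π with h2 | h2
    · have habs : |a| ≤ π := abs_le.mpr ⟨h.le, h2⟩
      rw [G1_eq_cosh habs, G1d, if_pos habs, Fint_eq_m h.le h2]
      have hs := Real.sin_two_mul (a / 2)
      rw [show 2 * (a / 2) = a by ring] at hs
      have hp := Real.sin_sq_add_cos_sq (a / 2)
      rw [hs]
      nlinarith [hp]
    · have habs : π < |a| := by rw [abs_of_pos (by linarith)]; exact h2
      rw [G1_eq_zero habs, G1d, if_neg (not_le.mpr habs)]; ring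

lemma final_alg (r μ G D F A a : ℝ) (hr : r ≠ 0) (hμ : μ ≠ 0)
    (hApi : A * r = (a + π) * μ) (hk : G - G ^ 2 + D * (F - (a + π) / 2) = 0) :
    - -1 / (r ^ 2) ^ 2 * G + (r ^ 2)⁻¹ * (D * (A * (1 / (2 * r) * -1) / μ))
      - ((r ^ 2)⁻¹ * G) ^ 2 + μ / r ^ 3 * F * ((r ^ 2)⁻¹ * (D * (r / μ))) = 0 := by
  have hA : A = (a + π) * μ / r := by
    field_simp
    linarith [hApi]
  subst hA
  field_simp
  linear_combination 2 * hk

/-- `ψ` is a backward self-similar solution of the inviscid reduced Prandtl equation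
`∂_t ψ − ψ² + (∫_{−∞}^y ψ)·∂_y ψ = 0`, blowing up at time `T`. -/
theorem stmt9 (T μ y₀ : ℝ) (hμ : 0 < μ) :
    ∀ t < T, ∀ y : ℝ,
      DifferentiableAt ℝ (fun s => ψfun T μ y₀ s y) t ∧
      DifferentiableAt ℝ (fun z => ψfun T μ y₀ t z) y ∧
      deriv (fun s => ψfun T μ y₀ s y) t - ψfun T μ y₀ t y ^ 2
        + (∫ z in Iic y, ψfun T μ y₀ t z) * deriv (fun z => ψfun T μ y₀ t z) y = 0 := by
  intro t ht y
  have hτ : 0 < T - t := sub_pos.mpr ht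
  have hrpow : ∀ s : ℝ, s < T → (T - s) ^ (-(1:ℝ)/2) = (Real.sqrt (T - s))⁻¹ := by
    intro s hs
    rw [show (-(1:ℝ)/2) = -(1/2) by ring, Real.rpow_neg (by linarith : (0:ℝ) ≤ T - s),
      ← Real.sqrt_eq_rpow]
  set r : ℝ := Real.sqrt (T - t) with hr_def
  have hr : 0 < r := Real.sqrt_pos.mpr hτ
  have hr2 : r ^ 2 = T - t := Real.sq_sqrt hτ.le
  set a : ℝ := (y - y₀) * r / μ - π with ha_def
  -- the argument rewriting
  have harg : ∀ z : ℝ, (z - (μ * π * (T - t) ^ (-(1:ℝ)/2) + y₀)) * r / μ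
      = (z - y₀) * r / μ - π := by
    intro z
    rw [hrpow t ht]
    field_simp
    ring
  have hker : ∀ z : ℝ, ψfun T μ y₀ t z = (T - t)⁻¹ * G1 ((z - y₀) * r / μ - π) := by
    intro z
    rw [ψfun, ← hr_def, harg z]
  -- y-derivative
  have hy : HasDerivAt (fun z => ψfun T μ y₀ t z) ((T - t)⁻¹ * (G1d a * (r / μ))) y := by
    have inner : HasDerivAt (fun z : ℝ => (z - y₀) * r / μ - π) (r / μ) y := by
      simpa using (((hasDerivAt_id y).sub_const y₀).mul_const r).div_const μ |>.sub_const π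
    have h2 := ((G1_hasDerivAt ((y - y₀) * r / μ - π)).comp y inner).const_mul ((T - t)⁻¹)
    simp only [Function.comp] at h2
    exact h2.congr_of_eventuallyEq (Filter.Eventually.of_forall fun z => hker z)
  -- t-derivative
  have hsub : HasDerivAt (fun s : ℝ => T - s) (-1) t := by
    simpa using (hasDerivAt_id t).const_sub T
  have hsqrt : HasDerivAt (fun s : ℝ => Real.sqrt (T - s)) (1 / (2 * r) * (-1)) t :=
    (Real.hasDerivAt_sqrt hτ.ne').comp t hsub
  have hinner : HasDerivAt (fun s : ℝ => (y - y₀) * Real.sqrt (T - s) / μ - π)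
      ((y - y₀) * (1 / (2 * r) * (-1)) / μ) t :=
    ((hsqrt.const_mul (y - y₀)).div_const μ).sub_const π
  have hG : HasDerivAt (fun s : ℝ => G1 ((y - y₀) * Real.sqrt (T - s) / μ - π))
      (G1d a * ((y - y₀) * (1 / (2 * r) * (-1)) / μ)) t := by
    have := (G1_hasDerivAt ((y - y₀) * Real.sqrt (T - t) / μ - π)).comp t hinner
    simpa only [Function.comp_def, ← hr_def, ← ha_def] using this
  have hinv : HasDerivAt (fun s : ℝ => (T - s)⁻¹) (-(-1) / (T - t) ^ 2) t :=
    hsub.inv hτ.ne'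
  have hφ : HasDerivAt
      (fun s : ℝ => (T - s)⁻¹ * G1 ((y - y₀) * Real.sqrt (T - s) / μ - π))
      (-(-1) / (T - t) ^ 2 * G1 a
        + (T - t)⁻¹ * (G1d a * ((y - y₀) * (1 / (2 * r) * (-1)) / μ))) t := by
    have := hinv.mul hG
    simpa only [Pi.mul_def, ← hr_def, ← ha_def] using this
  have hteq : (fun s => ψfun T μ y₀ s y) =ᶠ[nhds t]
      (fun s : ℝ => (T - s)⁻¹ * G1 ((y - y₀) * Real.sqrt (T - s) / μ - π)) := by
    filter_upwards [Iio_mem_nhds ht] with s hs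
    have hτs : 0 < T - s := sub_pos.mpr hs
    have hrs : 0 < Real.sqrt (T - s) := Real.sqrt_pos.mpr hτs
    rw [ψfun]
    congr 1
    rw [hrpow s hs]
    field_simp
    ring
  have hts : HasDerivAt (fun s => ψfun T μ y₀ s y)
      (-(-1) / (T - t) ^ 2 * G1 a
        + (T - t)⁻¹ * (G1d a * ((y - y₀) * (1 / (2 * r) * (-1)) / μ))) t :=
    hφ.congr_of_eventuallyEq hteq
  -- integral
  have hcont : Continuous (fun z => ψfun T μ y₀ t z) := by
    have : Continuous (fun z : ℝ => (T - t)⁻¹ * G1 ((z - y₀) * r / μ - π)) :=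
      continuous_const.mul (G1_continuous.comp (by continuity))
    exact this.congr fun z => (hker z).symm
  have hzero : ∀ z ≤ y₀, ψfun T μ y₀ t z = 0 := by
    intro z hz
    rw [hker z, G1_eq_zero_of_le, mul_zero]
    have hfac : (z - y₀) * r / μ = (z - y₀) * (r / μ) := by ring
    have : (z - y₀) * r / μ ≤ 0 := by
      rw [hfac]
      exact mul_nonpos_iff.mpr (Or.inr ⟨by linarith, div_nonneg hr.le hμ.le⟩)
    linarith
  have hΦ : ∀ z : ℝ, HasDerivAt (fun w : ℝ => μ / r ^ 3 * Fint ((w - y₀) * r / μ - π))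
      (ψfun T μ y₀ t z) z := by
    intro z
    have inner : HasDerivAt (fun w : ℝ => (w - y₀) * r / μ - π) (r / μ) z := by
      simpa using (((hasDerivAt_id z).sub_const y₀).mul_const r).div_const μ |>.sub_const π
    have h2 := ((Fint_hasDerivAt ((z - y₀) * r / μ - π)).comp z inner).const_mul (μ / r ^ 3)
    simp only [Function.comp] at h2
    have heq : μ / r ^ 3 * (G1 ((z - y₀) * r / μ - π) * (r / μ))
        = ψfun T μ y₀ t z := by
      rw [hker z, ← hr2]
      field_simp
    rwa [heq] at h2
  have hΦy₀ : μ / r ^ 3 * Fint ((y₀ - y₀) * r / μ - π) = 0 := by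
    rw [show (y₀ - y₀) * r / μ - π = -π by rw [sub_self]; ring_nf,
      Fint_of_le le_rfl, mul_zero]
  have hint : (∫ z in Iic y, ψfun T μ y₀ t z) = μ / r ^ 3 * Fint a := by
    rcases le_or_gt y y₀ with hy₀ | hy₀
    · have h1 : ∫ z in Iic y, ψfun T μ y₀ t z = 0 := by
        rw [setIntegral_congr_fun measurableSet_Iic
          (fun z hz => hzero z (le_trans hz hy₀))]
        simp
      have h2 : Fint a = 0 := by
        apply Fint_of_le
        have hfac : (y - y₀) * r / μ = (y - y₀) * (r / μ) := by ring
        have : (y - y₀) * r / μ ≤ 0 := by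
          rw [hfac]
          exact mul_nonpos_iff.mpr (Or.inr ⟨by linarith, div_nonneg hr.le hμ.le⟩)
        rw [ha_def]; linarith
      rw [h1, h2, mul_zero]
    · have hsplit : Iic y = Iic y₀ ∪ Ioc y₀ y := (Iic_union_Ioc_eq_Iic hy₀.le).symm
      have hi1 : IntegrableOn (fun z => ψfun T μ y₀ t z) (Iic y₀) := by
        apply (integrableOn_congr_fun (fun z hz => hzero z hz) measurableSet_Iic).mpr
        exact integrableOn_zero
      have hi2 : IntegrableOn (fun z => ψfun T μ y₀ t z) (Ioc y₀ y) :=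
        hcont.integrableOn_Ioc
      rw [hsplit, setIntegral_union (Iic_disjoint_Ioc le_rfl) measurableSet_Ioc hi1 hi2]
      have h1 : ∫ z in Iic y₀, ψfun T μ y₀ t z = 0 := by
        rw [setIntegral_congr_fun measurableSet_Iic (fun z hz => hzero z hz)]
        simp
      have h2 : ∫ z in Ioc y₀ y, ψfun T μ y₀ t z = μ / r ^ 3 * Fint a := by
        rw [← intervalIntegral.integral_of_le hy₀.le,
          intervalIntegral.integral_eq_sub_of_hasDerivAt (fun z _ => hΦ z)
            (hcont.intervalIntegrable y₀ y), hΦy₀, sub_zero, ← ha_def]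
      rw [h1, h2, zero_add]
  refine ⟨hts.differentiableAt, hy.differentiableAt, ?_⟩
  rw [hts.deriv, hy.deriv, hint, hker y, ← ha_def]
  have hk := key_identity a
  have hApi : (y - y₀) * r = (a + π) * μ := by
    rw [ha_def]; field_simp; ring
  rw [← hr2]
  exact final_alg r μ (G1 a) (G1d a) (Fint a) (y - y₀) a hr.ne' hμ.ne' hApi hk
end

section
/- Let k(y) = Σ_{n=0}^∞ yⁿ/(n!)² and let u₀ : [0,∞) → ℝ be continuously differentiable. Define, for t ≥ 0 and x ≥ 0, u(t,x) := u₀(0)·k(tx) + ∫_0^x u₀′(y)·k(t(x−y)) dy. Then u(0,x) = u₀(x) for all x ≥ 0, and for all t ≥ 0 and x ≥ 0, ∂_t u(t,x) = ∫_0^x u(t,x̃) dx̃. -/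
open Real MeasureTheory Set

/-- The kernel `k(y) = Σ_{n≥0} yⁿ/(n!)²` of the nonlocal model problem. -/
noncomputable def kfun (y : ℝ) : ℝ := ∑' n : ℕ, y ^ n / (Nat.factorial n : ℝ) ^ 2

namespace NL

lemma summable_aux {c : ℕ → ℝ} (hc : ∀ n, |c n| ≤ ((Nat.factorial n : ℝ))⁻¹) (y : ℝ) :
    Summable fun n => c n * y ^ n := by
  apply Summable.of_abs
  refine Summable.of_nonneg_of_le (fun n => abs_nonneg _) (fun n => ?_)
    (Real.summable_pow_div_factorial |y|)
  rw [abs_mul, abs_pow, div_eq_mul_inv, mul_comm (|y| ^ n)]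
  exact mul_le_mul_of_nonneg_right (hc n) (by positivity)

lemma abs_tsum_le {c : ℕ → ℝ} (hc : ∀ n, |c n| ≤ ((Nat.factorial n : ℝ))⁻¹) (y : ℝ) :
    |∑' n, c n * y ^ n| ≤ Real.exp |y| := by
  have hs : Summable fun n => |c n * y ^ n| := (summable_aux hc y).abs
  have h0 : ‖∑' n, c n * y ^ n‖ ≤ ∑' n, ‖c n * y ^ n‖ := norm_tsum_le_tsum_norm hs
  simp only [Real.norm_eq_abs] at h0
  have h1 : ∑' n, |c n * y ^ n| ≤ ∑' n, |y| ^ n / (Nat.factorial n : ℝ) := by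
    refine hs.tsum_le_tsum (fun n => ?_) (Real.summable_pow_div_factorial |y|)
    rw [abs_mul, abs_pow, div_eq_mul_inv, mul_comm (|y| ^ n)]
    exact mul_le_mul_of_nonneg_right (hc n) (by positivity)
  refine (h0.trans h1).trans_eq ?_
  rw [Real.exp_eq_exp_ℝ, NormedSpace.exp_eq_tsum_div]

lemma hasDerivAt_pseries {c : ℕ → ℝ} (hc : ∀ n, |c n| ≤ ((Nat.factorial n : ℝ))⁻¹) (y : ℝ) :
    HasDerivAt (fun x => ∑' n, c n * x ^ n)
      (∑' n : ℕ, (((n : ℝ) + 1) * c (n + 1)) * y ^ n) y := by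
  set R : ℝ := |y| + 1 with hR
  have hR1 : (1 : ℝ) ≤ R := le_add_of_nonneg_left (abs_nonneg y)
  have hyR : y ∈ Metric.ball (0:ℝ) R := by
    simp only [Metric.mem_ball, Real.dist_eq, sub_zero, hR]
    exact lt_add_one |y|
  have hbd : ∀ (n : ℕ) (x : ℝ), x ∈ Metric.ball (0:ℝ) R →
      ‖c n * ((n : ℝ) * x ^ (n - 1))‖ ≤ (2 * R) ^ n / (Nat.factorial n : ℝ) := by
    intro n x hx
    have hxR : |x| ≤ R := by
      simp only [Metric.mem_ball, Real.dist_eq, sub_zero] at hx; exact hx.le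
    have h1 : |x| ^ (n - 1) ≤ R ^ (n - 1) := pow_le_pow_left₀ (abs_nonneg x) hxR _
    have h2 : R ^ (n - 1) ≤ R ^ n := pow_le_pow_right₀ hR1 (Nat.sub_le n 1)
    have h3 : (n : ℝ) ≤ 2 ^ n := by exact_mod_cast (Nat.lt_two_pow_self (n := n)).le
    rw [Real.norm_eq_abs, abs_mul, abs_mul, abs_pow, Nat.abs_cast]
    calc |c n| * ((n : ℝ) * |x| ^ (n - 1))
        ≤ (Nat.factorial n : ℝ)⁻¹ * ((2:ℝ) ^ n * R ^ n) := by
          refine mul_le_mul (hc n) ?_ (by positivity) (by positivity)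
          exact mul_le_mul h3 (h1.trans h2) (by positivity) (by positivity)
      _ = (2 * R) ^ n / (Nat.factorial n : ℝ) := by
          rw [mul_pow]; ring
  have hu : Summable fun n => (2 * R) ^ n / (Nat.factorial n : ℝ) :=
    Real.summable_pow_div_factorial (2 * R)
  have hder : HasDerivAt (fun x => ∑' n, c n * x ^ n)
      (∑' n, c n * ((n : ℝ) * y ^ (n - 1))) y :=
    hasDerivAt_tsum_of_isPreconnected hu Metric.isOpen_ball
      (convex_ball (0:ℝ) R).isPreconnected
      (fun n x _ => ((hasDerivAt_pow n x).const_mul (c n)))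
      hbd (Metric.mem_ball_self (by positivity)) (summable_aux hc 0) hyR
  have hs : Summable fun n => c n * ((n : ℝ) * y ^ (n - 1)) :=
    Summable.of_norm_bounded hu (fun n => hbd n y hyR)
  have hre : ∑' n, c n * ((n : ℝ) * y ^ (n - 1))
      = ∑' n : ℕ, (((n : ℝ) + 1) * c (n + 1)) * y ^ n := by
    rw [hs.tsum_eq_zero_add]
    simp only [Nat.cast_zero, zero_mul, mul_zero, zero_add, Nat.cast_add, Nat.cast_one,
      Nat.add_sub_cancel]
    exact tsum_congr fun n => by ring
  exact hre ▸ hder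

noncomputable def c0 (n : ℕ) : ℝ := ((Nat.factorial n : ℝ) ^ 2)⁻¹
noncomputable def c1 (n : ℕ) : ℝ := ((Nat.factorial (n+1) : ℝ) * (Nat.factorial n : ℝ))⁻¹
noncomputable def c2 (n : ℕ) : ℝ := ((Nat.factorial (n+2) : ℝ) * (Nat.factorial n : ℝ))⁻¹
noncomputable def dd : ℕ → ℝ
  | 0 => 0
  | (n+1) => c2 n

lemma fac_pos (n : ℕ) : (0:ℝ) < (Nat.factorial n : ℝ) := by
  exact_mod_cast Nat.factorial_pos n

lemma fac_one_le (n : ℕ) : (1:ℝ) ≤ (Nat.factorial n : ℝ) := by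
  exact_mod_cast Nat.one_le_iff_ne_zero.mpr (Nat.factorial_ne_zero n)

lemma c0_bd : ∀ n, |c0 n| ≤ ((Nat.factorial n : ℝ))⁻¹ := by
  intro n
  rw [c0, abs_of_nonneg (by positivity)]
  apply inv_anti₀ (fac_pos n)
  nlinarith [fac_one_le n, fac_pos n]

lemma c1_bd : ∀ n, |c1 n| ≤ ((Nat.factorial n : ℝ))⁻¹ := by
  intro n
  rw [c1, abs_of_nonneg (by positivity)]
  apply inv_anti₀ (fac_pos n)
  nlinarith [fac_one_le (n+1), fac_pos n]

lemma c2_bd : ∀ n, |c2 n| ≤ ((Nat.factorial n : ℝ))⁻¹ := by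
  intro n
  rw [c2, abs_of_nonneg (by positivity)]
  apply inv_anti₀ (fac_pos n)
  nlinarith [fac_one_le (n+2), fac_pos n]

lemma dd_bd : ∀ n, |dd n| ≤ ((Nat.factorial n : ℝ))⁻¹ := by
  intro n
  cases n with
  | zero => simp [dd]
  | succ n =>
    show |c2 n| ≤ _
    rw [c2, abs_of_nonneg (by positivity)]
    apply inv_anti₀ (fac_pos (n+1))
    have h : (Nat.factorial (n+1) : ℝ) ≤ (Nat.factorial (n+2) : ℝ) := by
      exact_mod_cast Nat.factorial_le (by omega)
    nlinarith [fac_one_le n, fac_pos n, fac_pos (n+1), fac_pos (n+2)]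

lemma kfun_eq (y : ℝ) : kfun y = ∑' n, c0 n * y ^ n := by
  unfold kfun c0
  exact tsum_congr fun n => by rw [div_eq_mul_inv, mul_comm]

noncomputable def k1fun (y : ℝ) : ℝ := ∑' n, c1 n * y ^ n
noncomputable def k2fun (y : ℝ) : ℝ := ∑' n, c2 n * y ^ n

lemma coeff01 (n : ℕ) : ((n : ℝ) + 1) * c0 (n+1) = c1 n := by
  rw [c0, c1, Nat.factorial_succ]
  have h0 := fac_pos n
  push_cast
  field_simp

lemma coeff12 (n : ℕ) : ((n : ℝ) + 1) * c1 (n+1) = c2 n := by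
  rw [c1, c2]
  have e : n + 1 + 1 = n + 2 := rfl
  rw [e, Nat.factorial_succ (n+1), Nat.factorial_succ n]
  have h0 := fac_pos n
  have h1 := fac_pos (n+1)
  have h2 := fac_pos (n+2)
  push_cast
  field_simp

lemma hasDerivAt_kfun (y : ℝ) : HasDerivAt kfun (k1fun y) y := by
  have h := hasDerivAt_pseries c0_bd y
  simp only [coeff01] at h
  have : (fun x => ∑' n, c0 n * x ^ n) = kfun := funext fun x => (kfun_eq x).symm
  rwa [this] at h

lemma hasDerivAt_k1fun (y : ℝ) : HasDerivAt k1fun (k2fun y) y := by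
  have h := hasDerivAt_pseries c1_bd y
  simp only [coeff12] at h
  exact h

lemma kfun_identity (y : ℝ) : k1fun y + y * k2fun y = kfun y := by
  have h2 : y * k2fun y = ∑' n, dd n * y ^ n := by
    rw [k2fun, ← tsum_mul_left, (summable_aux dd_bd y).tsum_eq_zero_add]
    show _ = dd 0 * y ^ 0 + _
    simp only [dd, zero_mul, zero_add]
    exact tsum_congr fun n => by rw [pow_succ]; ring
  rw [kfun_eq, k1fun, h2, ← (summable_aux c1_bd y).tsum_add (summable_aux dd_bd y)]
  refine tsum_congr fun n => ?_
  rw [← add_mul]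
  congr 1
  cases n with
  | zero => simp [c1, c0, dd, Nat.factorial]
  | succ n =>
    show c1 (n+1) + c2 n = c0 (n+1)
    rw [c1, c2, c0, Nat.factorial_succ (n+1), Nat.factorial_succ n]
    have h0 := fac_pos n
    have h1 := fac_pos (n+1)
    push_cast
    field_simp
    ring

lemma kfun_zero : kfun 0 = 1 := by
  rw [kfun_eq]
  rw [tsum_eq_single 0 (fun n hn => by simp [zero_pow hn])]
  simp [c0]

lemma continuous_kfun : Continuous kfun :=
  continuous_iff_continuousAt.mpr fun y => (hasDerivAt_kfun y).continuousAt

lemma continuous_k1fun : Continuous k1fun :=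
  continuous_iff_continuousAt.mpr fun y => (hasDerivAt_k1fun y).continuousAt

lemma abs_k1fun_le (y : ℝ) : |k1fun y| ≤ Real.exp |y| := abs_tsum_le c1_bd y

lemma abs_kfun_le (y : ℝ) : |kfun y| ≤ Real.exp |y| := by
  rw [kfun_eq]; exact abs_tsum_le c0_bd y

/-- FTC identity: `∫_a^x k(t(z-a)) dz = (x-a) k₁(t(x-a))`. -/
lemma key_integral (t a x : ℝ) :
    ∫ z in a..x, kfun (t * (z - a)) = (x - a) * k1fun (t * (x - a)) := by
  have hderiv : ∀ z ∈ uIcc a x,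
      HasDerivAt (fun z => (z - a) * k1fun (t * (z - a))) (kfun (t * (z - a))) z := by
    intro z _
    have h1 : HasDerivAt (fun z : ℝ => t * (z - a)) t z := by
      simpa using ((hasDerivAt_id z).sub_const a).const_mul t
    have h2 : HasDerivAt (fun z : ℝ => k1fun (t * (z - a)))
        (k2fun (t * (z - a)) * t) z := by
        have := (hasDerivAt_k1fun (t * (z - a))).comp z h1; exact this
    have h3 : HasDerivAt (fun z : ℝ => (z - a) * k1fun (t * (z - a)))
        (1 * k1fun (t * (z - a)) + (z - a) * (k2fun (t * (z - a)) * t)) z :=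
      ((hasDerivAt_id z).sub_const a).mul h2
    convert h3 using 1
    rw [← kfun_identity (t * (z - a))]
    ring
  have := intervalIntegral.integral_eq_sub_of_hasDerivAt hderiv
    ((continuous_kfun.comp
      (continuous_const.mul (continuous_id.sub continuous_const))).intervalIntegrable a x)
  rw [this]
  simp

end NL

open NL

/-- The convolution-type solution `u(t,x) = u₀(0)k(tx) + ∫₀^x u₀′(y)k(t(x−y))dy` of the
nonlocal model problem with initial datum `u₀`. -/
noncomputable def ufun (u₀ : ℝ → ℝ) (t x : ℝ) : ℝ :=
  u₀ 0 * kfun (t * x) + ∫ y in (0:ℝ)..x, derivWithin u₀ (Ici 0) y * kfun (t * (x - y))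

/-- `u` attains the initial datum `u₀` at `t = 0` and solves `∂_t u(t,x) = ∫₀^x u(t,·)`
for `t, x ≥ 0`. -/
theorem stmt12 (u₀ : ℝ → ℝ) (h : ContDiffOn ℝ 1 u₀ (Ici 0)) :
    (∀ x ≥ (0:ℝ), ufun u₀ 0 x = u₀ x) ∧
    ∀ t ≥ (0:ℝ), ∀ x ≥ (0:ℝ),
      deriv (fun s => ufun u₀ s x) t = ∫ z in (0:ℝ)..x, ufun u₀ t z := by
  set g : ℝ → ℝ := derivWithin u₀ (Ici 0) with hg
  have hgc : ContinuousOn g (Ici 0) :=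
    h.continuousOn_derivWithin (uniqueDiffOn_Ici 0) le_rfl
  constructor
  · intro x hx
    have hFTC : ∫ y in (0:ℝ)..x, g y = u₀ x - u₀ 0 := by
      refine intervalIntegral.integral_eq_sub_of_hasDeriv_right_of_le hx
        (h.continuousOn.mono (Icc_subset_Ici_self)) (fun y hy => ?_) ?_
      · have hD : DifferentiableWithinAt ℝ u₀ (Ici 0) y :=
          (h.differentiableOn one_ne_zero) y hy.1.le
        exact ((hD.hasDerivWithinAt).hasDerivAt (Ici_mem_nhds hy.1)).hasDerivWithinAt
      · exact (hgc.mono (by rw [uIcc_of_le hx]; exact Icc_subset_Ici_self)).intervalIntegrable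
    have : ufun u₀ 0 x = u₀ 0 + ∫ y in (0:ℝ)..x, g y := by
      rw [ufun]
      simp only [zero_mul, kfun_zero, mul_one]
      rfl
    rw [this, hFTC]; ring
  · intro t ht x hx
    -- continuous global extension of g from [0, x]
    set G : ℝ → ℝ := fun y => g (min x (max 0 y)) with hGdef
    have hclamp : ∀ y, min x (max 0 y) ∈ Icc 0 x := fun y =>
      ⟨le_min hx (le_max_left 0 y), min_le_left _ _⟩
    have hGc : Continuous G := by
      refine (hgc.mono (Icc_subset_Ici_self : Icc (0:ℝ) x ⊆ Ici 0)).comp_continuous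
        (continuous_const.min (continuous_const.max continuous_id)) hclamp
    have hGg : ∀ y ∈ Icc (0:ℝ) x, G y = g y := by
      intro y hy
      simp only [hGdef, max_eq_right hy.1, min_eq_right hy.2]
    obtain ⟨C, hC⟩ : ∃ C, ∀ w ∈ Icc (0:ℝ) x, ‖g w‖ ≤ C :=
      (isCompact_Icc).exists_bound_of_continuousOn (hgc.mono Icc_subset_Ici_self)
    have hGbd : ∀ y, |G y| ≤ C := fun y => hC _ (hclamp y)
    have hC0 : 0 ≤ C := le_trans (norm_nonneg _) (hC 0 ⟨le_refl 0, hx⟩)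
    -- rewrite ufun with G
    have hufun : ∀ s z, z ∈ Icc (0:ℝ) x →
        ufun u₀ s z = u₀ 0 * kfun (s * z) + ∫ y in (0:ℝ)..z, G y * kfun (s * (z - y)) := by
      intro s z hz
      rw [ufun]
      congr 1
      refine intervalIntegral.integral_congr fun y hy => ?_
      rw [uIcc_of_le hz.1] at hy
      rw [hGg y ⟨hy.1, hy.2.trans hz.2⟩]
    -- the t-derivative
    have hD1 : HasDerivAt (fun s => u₀ 0 * kfun (s * x)) (u₀ 0 * (k1fun (t * x) * x)) t := by
      have h1 : HasDerivAt (fun s : ℝ => s * x) x t := by simpa using (hasDerivAt_id t).mul_const x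
      exact ((hasDerivAt_kfun (t * x)).comp t h1).const_mul _
    have hD2 : HasDerivAt (fun s => ∫ y in (0:ℝ)..x, G y * kfun (s * (x - y)))
        (∫ y in (0:ℝ)..x, G y * ((x - y) * k1fun (t * (x - y)))) t := by
      have key := intervalIntegral.hasDerivAt_integral_of_dominated_loc_of_deriv_le
        (F := fun s y => G y * kfun (s * (x - y)))
        (F' := fun s y => G y * ((x - y) * k1fun (s * (x - y))))
        (bound := fun _ => C * (x * Real.exp ((|t| + 1) * x)))
        (μ := volume) (a := 0) (b := x) (x₀ := t) (s := Metric.ball t 1) (Metric.ball_mem_nhds t one_pos)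
        ?_ ?_ ?_ ?_ ?_ ?_
      · exact key.2
      · exact Filter.Eventually.of_forall fun s =>
          (hGc.mul (continuous_kfun.comp
            (continuous_const.mul (continuous_const.sub continuous_id)))).aestronglyMeasurable
      · exact (hGc.mul (continuous_kfun.comp
          (continuous_const.mul (continuous_const.sub continuous_id)))).intervalIntegrable 0 x
      · exact (hGc.mul ((continuous_const.sub continuous_id).mul (continuous_k1fun.comp
          (continuous_const.mul (continuous_const.sub continuous_id))))).aestronglyMeasurable
      · refine Filter.Eventually.of_forall fun y hy s hs => ?_
        rw [uIoc_of_le hx] at hy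
        have h1 : |x - y| ≤ x := by
          rw [abs_of_nonneg (by linarith [hy.2])]; linarith [hy.1]
        have h2 : |s| ≤ |t| + 1 := by
          have := mem_ball_iff_norm.mp hs
          calc |s| = |s - t + t| := by ring_nf
            _ ≤ |s - t| + |t| := abs_add_le _ _
            _ ≤ |t| + 1 := by rw [Real.norm_eq_abs] at this; linarith
        have h3 : |k1fun (s * (x - y))| ≤ Real.exp ((|t| + 1) * x) := by
          refine (abs_k1fun_le _).trans (Real.exp_le_exp.mpr ?_)
          rw [abs_mul]
          have := mul_le_mul h2 h1 (abs_nonneg _) (by positivity)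
          linarith
        rw [Real.norm_eq_abs, abs_mul, abs_mul]
        refine mul_le_mul (hGbd y) ?_ (by positivity) hC0
        exact mul_le_mul h1 h3 (abs_nonneg _) hx
      · exact intervalIntegrable_const
      · refine Filter.Eventually.of_forall fun y hy s hs => ?_
        have h1 : HasDerivAt (fun s : ℝ => s * (x - y)) (x - y) s := by
          simpa using (hasDerivAt_id s).mul_const (x - y)
        have h2 := ((hasDerivAt_kfun (s * (x - y))).comp s h1).const_mul (G y)
        convert h2 using 1
        · rfl
        · rfl
        · ring
    have hderiv : deriv (fun s => ufun u₀ s x) t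
        = u₀ 0 * (k1fun (t * x) * x) + ∫ y in (0:ℝ)..x, G y * ((x - y) * k1fun (t * (x - y))) := by
      have : (fun s => ufun u₀ s x)
          = fun s => u₀ 0 * kfun (s * x) + ∫ y in (0:ℝ)..x, G y * kfun (s * (x - y)) :=
        funext fun s => hufun s x ⟨hx, le_refl x⟩
      rw [this]
      exact (hD1.add hD2).deriv
    rw [hderiv]
    -- now compute the right-hand side
    set μx := volume.restrict (Ioc (0:ℝ) x) with hμx
    haveI hfin : IsFiniteMeasure μx :=
      ⟨by rw [hμx, Measure.restrict_apply_univ]; exact measure_Ioc_lt_top⟩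
    set F2 : ℝ × ℝ → ℝ := fun p => Set.indicator {p : ℝ × ℝ | p.2 ≤ p.1}
        (fun p => G p.2 * kfun (t * (p.1 - p.2))) p with hF2
    have hF2meas : StronglyMeasurable F2 := by
      refine StronglyMeasurable.indicator ?_ ?_
      · exact ((hGc.comp continuous_snd).mul (continuous_kfun.comp
          (continuous_const.mul (continuous_fst.sub continuous_snd)))).stronglyMeasurable
      · exact (isClosed_le continuous_snd continuous_fst).measurableSet
    have hF2bd : ∀ p : ℝ × ℝ, p ∈ Ioc (0:ℝ) x ×ˢ Ioc (0:ℝ) x →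
        ‖F2 p‖ ≤ C * Real.exp (|t| * x) := by
      rintro ⟨z, y⟩ ⟨hz, hy⟩
      rw [hF2, Real.norm_eq_abs]
      by_cases hzy : y ≤ z
      · simp only [Set.indicator_apply, Set.mem_setOf_eq, if_pos hzy]
        rw [abs_mul]
        refine mul_le_mul (hGbd y) ?_ (abs_nonneg _) hC0
        refine (abs_kfun_le _).trans (Real.exp_le_exp.mpr ?_)
        rw [abs_mul]
        refine mul_le_mul le_rfl ?_ (abs_nonneg _) (abs_nonneg _)
        rw [abs_of_nonneg (by linarith [hzy])]
        linarith [hz.2, hy.1]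
      · simp only [Set.indicator_apply, Set.mem_setOf_eq, if_neg hzy, abs_zero]
        positivity
    have hF2int : Integrable F2 (μx.prod μx) := by
      refine ⟨hF2meas.aestronglyMeasurable, ?_⟩
      refine HasFiniteIntegral.of_bounded (C := C * Real.exp (|t| * x)) ?_
      have hmem : ∀ᵐ p ∂(μx.prod μx), p ∈ Ioc (0:ℝ) x ×ˢ Ioc (0:ℝ) x := by
        rw [hμx, Measure.prod_restrict]
        exact ae_restrict_mem (measurableSet_Ioc.prod measurableSet_Ioc)
      exact hmem.mono fun p hp => hF2bd p hp
    have inner1 : ∀ z ∈ Ioc (0:ℝ) x,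
        ∫ y, F2 (z, y) ∂μx = ∫ y in (0:ℝ)..z, G y * kfun (t * (z - y)) := by
      intro z hz
      have heq : (fun y => F2 (z, y))
          = (Iic z).indicator (fun y => G y * kfun (t * (z - y))) := by
        funext y
        simp only [hF2, Set.indicator_apply, Set.mem_setOf_eq, Set.mem_Iic]
      rw [heq, integral_indicator measurableSet_Iic, hμx,
        Measure.restrict_restrict measurableSet_Iic]
      have hset : Iic z ∩ Ioc (0:ℝ) x = Ioc 0 z := by
        ext w
        simp only [mem_inter_iff, mem_Iic, mem_Ioc]
        exact ⟨fun ⟨h1, h2, _⟩ => ⟨h2, h1⟩, fun ⟨h1, h2⟩ => ⟨h2, h1, h2.trans hz.2⟩⟩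
      rw [hset, intervalIntegral.integral_of_le hz.1.le]
    have inner2 : ∀ y ∈ Ioc (0:ℝ) x,
        ∫ z, F2 (z, y) ∂μx = G y * ((x - y) * k1fun (t * (x - y))) := by
      intro y hy
      have heq : (fun z => F2 (z, y))
          = (Ici y).indicator (fun z => G y * kfun (t * (z - y))) := by
        funext z
        simp only [hF2, Set.indicator_apply, Set.mem_setOf_eq, Set.mem_Ici]
      rw [heq, integral_indicator measurableSet_Ici, hμx,
        Measure.restrict_restrict measurableSet_Ici]
      have hset : Ici y ∩ Ioc (0:ℝ) x = Icc y x := by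
        ext w
        simp only [mem_inter_iff, mem_Ici, mem_Ioc, mem_Icc]
        exact ⟨fun ⟨h1, _, h3⟩ => ⟨h1, h3⟩, fun ⟨h1, h2⟩ => ⟨h1, lt_of_lt_of_le hy.1 h1, h2⟩⟩
      rw [hset, integral_Icc_eq_integral_Ioc, ← intervalIntegral.integral_of_le hy.2,
        intervalIntegral.integral_const_mul, key_integral t y x]
    have hint1 : Integrable (fun z => u₀ 0 * kfun (t * z)) μx :=
      (continuous_const.mul (continuous_kfun.comp
        (continuous_const.mul continuous_id))).integrableOn_Ioc
    have hint2 : Integrable (fun z => ∫ y, F2 (z, y) ∂μx) μx := hF2int.integral_prod_left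
    have hsplit : ∫ z in (0:ℝ)..x, ufun u₀ t z
        = ∫ z, (u₀ 0 * kfun (t * z) + ∫ y, F2 (z, y) ∂μx) ∂μx := by
      rw [intervalIntegral.integral_of_le hx]
      refine setIntegral_congr_fun measurableSet_Ioc fun z hz => ?_
      rw [hufun t z ⟨hz.1.le, hz.2⟩, inner1 z hz]
    have h1 : ∫ z, kfun (t * z) ∂μx = x * k1fun (t * x) := by
      have hk := key_integral t 0 x
      simp only [sub_zero] at hk
      rw [← hk, intervalIntegral.integral_of_le hx]
    have hswap : ∫ z, (∫ y, F2 (z, y) ∂μx) ∂μx = ∫ y, (∫ z, F2 (z, y) ∂μx) ∂μx := by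
      exact integral_integral_swap (f := fun z y => F2 (z, y)) hF2int
    have h2 : ∫ y, (∫ z, F2 (z, y) ∂μx) ∂μx
        = ∫ y in (0:ℝ)..x, G y * ((x - y) * k1fun (t * (x - y))) := by
      rw [intervalIntegral.integral_of_le hx]
      exact setIntegral_congr_fun measurableSet_Ioc fun y hy => inner2 y hy
    rw [hsplit, integral_add hint1 hint2, integral_const_mul, h1, hswap, h2]
    ring
end

section
/- Let k(y) = Σ_{n=0}^∞ yⁿ/(n!)². Then k(y)/e^{√y} → +∞ as y → +∞, and for every α > 1/2, k(y)/e^{y^α} → 0 as y → +∞. -/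
open Real Filter

lemma nat_lower (n : ℕ) : 4 ^ n * (Nat.factorial n) ^ 2 ≤ Nat.factorial (2 * n + 1) := by
  induction n with
  | zero => norm_num
  | succ n ih =>
    have h : 2 * (n + 1) + 1 = (2 * n + 1) + 2 := by ring
    rw [h, Nat.factorial_succ, Nat.factorial_succ, Nat.factorial_succ]
    calc 4 ^ (n + 1) * ((n + 1) * Nat.factorial n) ^ 2
        = (4 * (n + 1) ^ 2) * (4 ^ n * (Nat.factorial n) ^ 2) := by ring
      _ ≤ (4 * (n + 1) ^ 2) * Nat.factorial (2 * n + 1) := by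
          exact Nat.mul_le_mul_left _ ih
      _ ≤ ((2 * n + 1 + 2) * ((2 * n + 1 + 1) * Nat.factorial (2 * n + 1))) := by
          rw [← mul_assoc]; apply Nat.mul_le_mul_right; nlinarith
  
lemma nat_upper (n : ℕ) : Nat.factorial (2 * n) ≤ 4 ^ n * (Nat.factorial n) ^ 2 := by
  induction n with
  | zero => norm_num
  | succ n ih =>
    have h : 2 * (n + 1) = (2 * n) + 2 := by ring
    rw [h, Nat.factorial_succ, Nat.factorial_succ]
    calc (2 * n + 2) * ((2 * n + 1) * Nat.factorial (2 * n))
        ≤ (2 * n + 2) * ((2 * n + 2) * (4 ^ n * (Nat.factorial n) ^ 2)) := by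
          apply Nat.mul_le_mul_left
          exact Nat.mul_le_mul (by omega) ih
      _ = 4 ^ (n + 1) * ((n + 1) * Nat.factorial n) ^ 2 := by ring

lemma summable_k (y : ℝ) (hy : 0 ≤ y) :
    Summable (fun n : ℕ => y ^ n / (Nat.factorial n : ℝ) ^ 2) := by
  refine Summable.of_nonneg_of_le (fun n => by positivity) (fun n => ?_)
    (Real.summable_pow_div_factorial y)
  apply div_le_div_of_nonneg_left (by positivity) (by positivity)
  have h1 : (1 : ℝ) ≤ (Nat.factorial n : ℝ) := by exact_mod_cast Nat.one_le_iff_ne_zero.mpr (Nat.factorial_ne_zero n)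
  nlinarith

lemma kfun_nonneg (y : ℝ) (hy : 0 ≤ y) : 0 ≤ kfun y :=
  tsum_nonneg fun n => by positivity

lemma kfun_lower (y : ℝ) (hy : 0 < y) :
    Real.sinh (2 * Real.sqrt y) / (2 * Real.sqrt y) ≤ kfun y := by
  set z := Real.sqrt y with hzdef
  have hz : 0 < z := Real.sqrt_pos.mpr hy
  have hz2 : z ^ 2 = y := Real.sq_sqrt hy.le
  have hs := Real.hasSum_sinh (2 * z)
  have h1 : Real.sinh (2 * z) / (2 * z) = ∑' n : ℕ, (2 * z) ^ (2 * n + 1) / (Nat.factorial (2 * n + 1) : ℝ) / (2 * z) := by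
    rw [← hs.tsum_eq, tsum_div_const]
  rw [h1]
  refine Summable.tsum_le_tsum (fun n => ?_) (hs.summable.div_const _) (summable_k y hy.le)
  have he : (2 * z) ^ (2 * n + 1) / (Nat.factorial (2 * n + 1) : ℝ) / (2 * z)
      = 4 ^ n * y ^ n / (Nat.factorial (2 * n + 1) : ℝ) := by
    rw [pow_succ, pow_mul, mul_pow, ← hz2]
    field_simp
    ring
  rw [he]
  rw [div_le_div_iff₀ (by positivity) (by positivity)]
  have hnat : (4 : ℝ) ^ n * (Nat.factorial n : ℝ) ^ 2 ≤ (Nat.factorial (2 * n + 1) : ℝ) := by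
    exact_mod_cast nat_lower n
  have hy' : 0 ≤ y ^ n := by positivity
  calc 4 ^ n * y ^ n * (Nat.factorial n : ℝ) ^ 2
      = y ^ n * (4 ^ n * (Nat.factorial n : ℝ) ^ 2) := by ring
    _ ≤ y ^ n * (Nat.factorial (2 * n + 1) : ℝ) := by
        exact mul_le_mul_of_nonneg_left hnat hy'

lemma kfun_upper (y : ℝ) (hy : 0 ≤ y) : kfun y ≤ Real.exp (2 * Real.sqrt y) := by
  set z := Real.sqrt y with hzdef
  have hz : 0 ≤ z := Real.sqrt_nonneg y
  have hz2 : z ^ 2 = y := Real.sq_sqrt hy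
  have hs := Real.hasSum_cosh (2 * z)
  have h2 : kfun y ≤ Real.cosh (2 * z) := by
    rw [← hs.tsum_eq]
    refine Summable.tsum_le_tsum (fun n => ?_) (summable_k y hy) hs.summable
    have he : (2 * z) ^ (2 * n) / (Nat.factorial (2 * n) : ℝ)
        = 4 ^ n * y ^ n / (Nat.factorial (2 * n) : ℝ) := by
      rw [pow_mul, mul_pow, ← hz2, mul_pow]; norm_num
    rw [he, div_le_div_iff₀ (by positivity) (by positivity)]
    have hnat : (Nat.factorial (2 * n) : ℝ) ≤ 4 ^ n * (Nat.factorial n : ℝ) ^ 2 := by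
      exact_mod_cast nat_upper n
    have hy' : 0 ≤ y ^ n := by positivity
    calc y ^ n * (Nat.factorial (2 * n) : ℝ)
        ≤ y ^ n * (4 ^ n * (Nat.factorial n : ℝ) ^ 2) := mul_le_mul_of_nonneg_left hnat hy'
      _ = 4 ^ n * y ^ n * (Nat.factorial n : ℝ) ^ 2 := by ring
  refine h2.trans ?_
  rw [Real.cosh_eq]
  have : Real.exp (-(2 * z)) ≤ Real.exp (2 * z) := Real.exp_le_exp.mpr (by linarith)
  linarith

lemma tendsto_sqrt_atTop : Tendsto Real.sqrt atTop atTop := by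
  refine tendsto_atTop_atTop.mpr fun b => ⟨max 1 (b ^ 2), fun a ha => ?_⟩
  have h1 : (1 : ℝ) ≤ a := le_trans (le_max_left _ _) ha
  have h2 : b ^ 2 ≤ a := le_trans (le_max_right _ _) ha
  calc b ≤ |b| := le_abs_self b
    _ = Real.sqrt (b ^ 2) := (Real.sqrt_sq_eq_abs b).symm
    _ ≤ Real.sqrt a := Real.sqrt_le_sqrt h2

/-- Sub-exponential growth of `k`: `k(y)/e^{√y} → ∞` and `k(y)/e^{y^α} → 0` for every
`α > 1/2`, as `y → +∞`. -/
theorem stmt13 :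
    Tendsto (fun y : ℝ => kfun y / Real.exp (Real.sqrt y)) atTop atTop ∧
    ∀ α : ℝ, 1 / 2 < α →
      Tendsto (fun y : ℝ => kfun y / Real.exp (y ^ α)) atTop (nhds 0) := by
  constructor
  · -- part 1
    have hmono : ∀ᶠ y in atTop, Real.exp (Real.sqrt y) / (4 * Real.sqrt y) - 1
        ≤ kfun y / Real.exp (Real.sqrt y) := by
      filter_upwards [eventually_ge_atTop (1 : ℝ)] with y hy1
      set z := Real.sqrt y with hzdef
      have hz1 : 1 ≤ z := by
        rw [hzdef, show (1:ℝ) = Real.sqrt 1 by simp]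
        exact Real.sqrt_le_sqrt hy1
      have hz : 0 < z := lt_of_lt_of_le one_pos hz1
      set E := Real.exp z with hEdef
      have hE1 : 1 ≤ E := Real.one_le_exp (by linarith)
      have hE0 : 0 < E := lt_of_lt_of_le one_pos hE1
      have hsinh : (E ^ 2 - 1) / 2 ≤ Real.sinh (2 * z) := by
        rw [Real.sinh_eq]
        have h1 : Real.exp (2 * z) = E ^ 2 := by
          rw [two_mul, Real.exp_add, hEdef]; ring
        have h2 : Real.exp (-(2 * z)) ≤ 1 := Real.exp_le_one_iff.mpr (by linarith)
        have h3 : 0 < Real.exp (-(2 * z)) := Real.exp_pos _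
        rw [h1]; linarith
      have key : E / (4 * z) - 1 ≤ ((E ^ 2 - 1) / 2) / (2 * z * E) := by
        have h0 : E / (4 * z) - 1 = (E - 4 * z) / (4 * z) := by field_simp
        rw [h0, div_le_div_iff₀ (by positivity) (by positivity)]
        have h5 : (1:ℝ) * 1 ≤ z * E := mul_le_mul hz1 hE1 zero_le_one hz.le
        have h6 := mul_le_mul_of_nonneg_left h5 hz.le
        nlinarith
      calc E / (4 * z) - 1 ≤ ((E ^ 2 - 1) / 2) / (2 * z * E) := key
        _ ≤ Real.sinh (2 * z) / (2 * z * E) := by gcongr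
        _ = Real.sinh (2 * z) / (2 * z) / E := by rw [div_div]
        _ ≤ kfun y / E := by
            gcongr
            exact kfun_lower y (by linarith)
    have h1 : Tendsto (fun t : ℝ => Real.exp t / t) atTop atTop := by
      simpa using Real.tendsto_exp_div_pow_atTop 1
    have h2 : Tendsto (fun t : ℝ => Real.exp t / (4 * t) - 1) atTop atTop := by
      have h3 := h1.atTop_mul_const (show (0:ℝ) < 1/4 by norm_num)
      have h4 : Tendsto (fun t : ℝ => Real.exp t / (4 * t)) atTop atTop := by
        refine h3.congr' ?_
        filter_upwards [eventually_gt_atTop (0 : ℝ)] with t ht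
        field_simp
      simpa [sub_eq_add_neg] using tendsto_atTop_add_const_right atTop (-1 : ℝ) h4
    exact tendsto_atTop_mono' atTop hmono (h2.comp _root_.tendsto_sqrt_atTop)
  · intro α hα
    have hα0 : (0:ℝ) < α := by linarith
    have hub : ∀ᶠ y in atTop, kfun y / Real.exp (y ^ α) ≤ Real.exp (2 * Real.sqrt y - y ^ α) := by
      filter_upwards [eventually_ge_atTop (0 : ℝ)] with y hy0
      rw [Real.exp_sub]
      gcongr
      exact kfun_upper y hy0
    have hlb : ∀ᶠ y in atTop, 0 ≤ kfun y / Real.exp (y ^ α) := by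
      filter_upwards [eventually_ge_atTop (0 : ℝ)] with y hy0
      exact div_nonneg (kfun_nonneg y hy0) (Real.exp_pos _).le
    have hexp : Tendsto (fun y : ℝ => 2 * Real.sqrt y - y ^ α) atTop atBot := by
      have h1 : Tendsto (fun y : ℝ => y ^ α) atTop atTop := tendsto_rpow_atTop hα0
      have h2 : Tendsto (fun y : ℝ => 2 * y ^ ((1:ℝ)/2 - α) - 1) atTop (nhds (-1 : ℝ)) := by
        have h3 := tendsto_rpow_neg_atTop (show (0:ℝ) < α - 1/2 by linarith)
        have h4 : Tendsto (fun y : ℝ => y ^ ((1:ℝ)/2 - α)) atTop (nhds 0) := by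
          refine h3.congr fun y => ?_
          norm_num
        have h5 := (h4.const_mul (2:ℝ)).sub_const 1
        simpa using h5
      have h6 := Tendsto.atTop_mul_neg (show (-1:ℝ) < 0 by norm_num) h1 h2
      refine h6.congr' ?_
      filter_upwards [eventually_gt_atTop (0 : ℝ)] with y hy0
      rw [Real.sqrt_eq_rpow, mul_comm (2:ℝ) (y ^ ((1:ℝ)/2)), mul_sub, mul_one,
        ← mul_assoc, mul_comm (y ^ α) _, mul_assoc, ← Real.rpow_add hy0]
      ring_nf
    exact squeeze_zero' hlb hub (Real.tendsto_exp_atBot.comp hexp)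
end
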